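/- Let (aₙ) ⊂ H and R ∈ [0,∞] with 1/R = limsup |aₙ|^{1/n}, and let p ∈ H. Then the series ∑ₙ (q-p)^{*n} aₙ converges absolutely at every q with σ(q,p) < R, and does not converge at any q with σ(q,p) > R. -/

import Mathlib

local notation "ℍ" => Quaternion ℝ

/-- Convolution (star) product of coefficient sequences. -/
noncomputable def conv (a b : ℕ → ℍ) : ℕ → ℍ := fun n => ∑ k ∈ Finset.range (n+1), a k * b (n-k)

/-- Coefficient sequence of the polynomial `q - p` (right coefficients). -/
noncomputable def binomSeq (p : ℍ) : ℕ → ℍ := fun k => if k = 0 then -p else if k = 1 then 1 else 0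

/-- n-fold star (convolution) power of a coefficient sequence. -/
noncomputable def convPow (a : ℕ → ℍ) : ℕ → ℕ → ℍ
  | 0 => fun k => if k = 0 then 1 else 0
  | n+1 => conv (convPow a n) a

/-- The regular power `(q-p)^{*n}` evaluated at `q`. -/
noncomputable def starPow (p : ℍ) (n : ℕ) (q : ℍ) : ℍ :=
  ∑ k ∈ Finset.range (n+1), q^k * convPow (binomSeq p) n k

noncomputable def omegaDist (q p : ℍ) : ℝ :=
  Real.sqrt ((q.re - p.re)^2 + (‖q.im‖ + ‖p.im‖)^2)

/-- `q` and `p` lie in a common complex line `L_I = ℝ + Iℝ`. -/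
def SameLine (q p : ℍ) : Prop :=
  ∃ I : ℍ, I^2 = -1 ∧ (∃ a b : ℝ, q = (a : ℍ) + b • I) ∧ (∃ a b : ℝ, p = (a : ℍ) + b • I)

open Classical in
noncomputable def sigmaDist (q p : ℍ) : ℝ :=
  if SameLine q p then ‖q - p‖ else omegaDist q p

lemma unit_re {I : ℍ} (hI : I * I = -1) : I.re = 0 := by
  have h1 := congrArg QuaternionAlgebra.re hI
  have h2 := congrArg QuaternionAlgebra.imI hI
  have h3 := congrArg QuaternionAlgebra.imJ hI
  have h4 := congrArg QuaternionAlgebra.imK hI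
  simp only [Quaternion.re_mul, Quaternion.imI_mul, Quaternion.imJ_mul, Quaternion.imK_mul,
    Quaternion.re_neg, Quaternion.imI_neg, Quaternion.imJ_neg, Quaternion.imK_neg,
    Quaternion.re_one, Quaternion.imI_one, Quaternion.imJ_one, Quaternion.imK_one, neg_zero] at h1 h2 h3 h4
  by_contra h
  have hi : I.imI = 0 := by
    have h' : I.re * I.imI = 0 := by linear_combination h2 / 2
    rcases mul_eq_zero.mp h' with h'' | h'' <;> first | exact absurd h'' h | exact h''
  have hj : I.imJ = 0 := by
    have h' : I.re * I.imJ = 0 := by linear_combination h3 / 2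
    rcases mul_eq_zero.mp h' with h'' | h'' <;> first | exact absurd h'' h | exact h''
  have hk : I.imK = 0 := by
    have h' : I.re * I.imK = 0 := by linear_combination h4 / 2
    rcases mul_eq_zero.mp h' with h'' | h'' <;> first | exact absurd h'' h | exact h''
  rw [hi, hj, hk] at h1; nlinarith

lemma unit_star {I : ℍ} (hI : I * I = -1) : star I = -I :=
  Quaternion.star_eq_neg.mpr (unit_re hI)

lemma unit_norm {I : ℍ} (hI : I * I = -1) : ‖I‖ = 1 := by
  have h : I * star I = 1 := by rw [unit_star hI, mul_neg, hI, neg_neg]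
  have h2 : ‖I‖ * ‖I‖ = 1 := by
    rw [← Quaternion.normSq_eq_norm_mul_self, Quaternion.normSq_def, h, Quaternion.re_one]
  nlinarith [norm_nonneg I]

noncomputable def lft {I : ℍ} (hI : I * I = -1) : ℂ →ₐ[ℝ] ℍ := Complex.liftAux I hI

lemma lft_apply {I : ℍ} (hI : I * I = -1) (z : ℂ) : lft hI z = (z.re : ℍ) + z.im • I := by
  rw [lft, Complex.liftAux_apply]; rfl

lemma lft_star {I : ℍ} (hI : I * I = -1) (z : ℂ) :
    star (lft hI z) = lft hI ((starRingEnd ℂ) z) := by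
  rw [lft_apply, lft_apply, star_add]
  have hs : star (z.im • I) = z.im • star I := by
    rw [Algebra.smul_def, Algebra.smul_def, star_mul, Quaternion.algebraMap_def,
      Quaternion.star_coe]
    exact (Quaternion.coe_commute z.im (star I)).symm
  rw [hs, unit_star hI, Complex.conj_re, Complex.conj_im, Quaternion.star_coe, smul_neg,
    ← neg_smul]

lemma lft_norm {I : ℍ} (hI : I * I = -1) (z : ℂ) : ‖lft hI z‖ = ‖z‖ := by
  have h : lft hI z * star (lft hI z) = ((Complex.normSq z : ℝ) : ℍ) := by
    rw [lft_star, ← map_mul, Complex.mul_conj]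
    show lft hI (algebraMap ℝ ℂ (Complex.normSq z)) = _
    rw [AlgHom.commutes]; rfl
  have h2 : ‖lft hI z‖ * ‖lft hI z‖ = ‖z‖ * ‖z‖ := by
    rw [← Quaternion.normSq_eq_norm_mul_self, Quaternion.normSq_def, h, Quaternion.re_coe,
      ← Complex.sq_norm]; ring
  nlinarith [norm_nonneg (lft hI z), norm_nonneg z, norm_nonneg z]

lemma lft_comm {I : ℍ} (hI : I * I = -1) (z : ℂ) : I * lft hI z = lft hI z * I := by
  rw [lft_apply, add_mul, mul_add]
  rw [mul_smul_comm, smul_mul_assoc]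
  congr 1
  exact (Quaternion.coe_commute z.re I).symm


lemma convPow_binomSeq (p : ℍ) (n k : ℕ) :
    convPow (binomSeq p) n k = ((n.choose k : ℝ)) • (-p)^(n-k) := by
  induction n generalizing k with
  | zero =>
    simp only [convPow]
    rcases k with _ | k
    · norm_num
    · simp
  | succ n ih =>
    show conv (convPow (binomSeq p) n) (binomSeq p) k = _
    rw [conv]
    rcases k with _ | m
    · -- k = 0
      rw [show (0:ℕ)+1 = 1 from rfl, Finset.range_one, Finset.sum_singleton, ih 0,
        show binomSeq p 0 = -p from rfl]
      simp only [smul_mul_assoc, Nat.sub_zero, Nat.choose_zero_right, Nat.cast_one, one_smul]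
      rw [pow_succ, mul_neg]
    · -- k = m+1
      rw [Finset.sum_range_succ, Finset.sum_range_succ]
      have h0 : ∀ j ∈ Finset.range m, convPow (binomSeq p) n j * binomSeq p (m + 1 - j) = 0 := by
        intro j hj
        have h1 : m + 1 - j ≠ 0 := by simp only [Finset.mem_range] at hj; omega
        have h2 : m + 1 - j ≠ 1 := by simp only [Finset.mem_range] at hj; omega
        rw [binomSeq]; simp [h1, h2]
      rw [Finset.sum_eq_zero h0, zero_add]
      have hb1 : binomSeq p (m + 1 - m) = 1 := by simp [binomSeq]
      have hb0 : binomSeq p (m + 1 - (m+1)) = -p := by simp [binomSeq]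
      rw [hb1, hb0, mul_one, ih, ih]
      rcases le_or_gt (m+1) n with h | h
      · have e1 : n - m = n - (m+1) + 1 := by omega
        have e2 : (n+1) - (m+1) = n - (m+1) + 1 := by omega
        rw [smul_mul_assoc, e1, e2, pow_succ, ← add_smul]
        congr 1
        push_cast [Nat.choose_succ_succ n m]
        ring
      · rcases eq_or_lt_of_le (Nat.succ_le_of_lt h) with h' | h'
        · -- n+1 = m+1
          have hm : m = n := by omega
          subst hm
          simp [Nat.choose_succ_self, Nat.choose_self, Nat.choose_eq_zero_of_lt]
        · have h1 : n.choose (m+1) = 0 := Nat.choose_eq_zero_of_lt (by omega)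
          have h2 : n.choose m = 0 := Nat.choose_eq_zero_of_lt (by omega)
          have h3 : (n+1).choose (m+1) = 0 := Nat.choose_eq_zero_of_lt (by omega)
          simp [h1, h2, h3]

lemma starPow_eq_sum (p q : ℍ) (n : ℕ) :
    starPow p n q = ∑ k ∈ Finset.range (n+1), (n.choose k : ℝ) • (q^k * (-p)^(n-k)) := by
  rw [starPow]
  refine Finset.sum_congr rfl fun k _ => ?_
  rw [convPow_binomSeq, mul_smul_comm]

lemma complexE (z w : ℂ) (n : ℕ) :
    ∑ k ∈ Finset.range (n+1), (n.choose k : ℝ) • (z^k * ((((-w)^(n-k)).re : ℝ) : ℂ)) =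
      ((z - w)^n + (z - (starRingEnd ℂ) w)^n) / 2 := by
  have h1 : (z - w)^n = ∑ k ∈ Finset.range (n+1), z^k * (-w)^(n-k) * (n.choose k : ℂ) := by
    rw [sub_eq_add_neg, add_pow]
  have h2 : (z - (starRingEnd ℂ) w)^n
      = ∑ k ∈ Finset.range (n+1), z^k * (starRingEnd ℂ) ((-w)^(n-k)) * (n.choose k : ℂ) := by
    rw [sub_eq_add_neg, add_pow]
    refine Finset.sum_congr rfl fun k _ => ?_
    rw [map_pow, map_neg]
  rw [h1, h2, ← Finset.sum_add_distrib, Finset.sum_div]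
  refine Finset.sum_congr rfl fun k _ => ?_
  have hc : (-w)^(n-k) + (starRingEnd ℂ) ((-w)^(n-k)) = 2*((((-w)^(n-k)).re : ℝ) : ℂ) := by
    rw [Complex.add_conj]; push_cast; ring
  rw [Complex.real_smul]
  push_cast
  linear_combination (-(z^k * (n.choose k : ℂ)) / 2) * hc

lemma complexF (z w : ℂ) (n : ℕ) :
    ∑ k ∈ Finset.range (n+1), (n.choose k : ℝ) • (z^k * ((((-w)^(n-k)).im : ℝ) : ℂ)) =
      ((z - w)^n - (z - (starRingEnd ℂ) w)^n) / (2 * Complex.I) := by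
  have h1 : (z - w)^n = ∑ k ∈ Finset.range (n+1), z^k * (-w)^(n-k) * (n.choose k : ℂ) := by
    rw [sub_eq_add_neg, add_pow]
  have h2 : (z - (starRingEnd ℂ) w)^n
      = ∑ k ∈ Finset.range (n+1), z^k * (starRingEnd ℂ) ((-w)^(n-k)) * (n.choose k : ℂ) := by
    rw [sub_eq_add_neg, add_pow]
    refine Finset.sum_congr rfl fun k _ => ?_
    rw [map_pow, map_neg]
  rw [h1, h2, ← Finset.sum_sub_distrib, Finset.sum_div]
  refine Finset.sum_congr rfl fun k _ => ?_
  have hc : (-w)^(n-k) - (starRingEnd ℂ) ((-w)^(n-k)) = 2*((((-w)^(n-k)).im : ℝ) : ℂ)*Complex.I := by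
    rw [Complex.sub_conj]; push_cast; ring
  rw [Complex.real_smul, eq_div_iff (by simp [Complex.I_ne_zero] : (2 : ℂ) * Complex.I ≠ 0)]
  push_cast
  linear_combination (-(z^k * (n.choose k : ℂ))) * hc

lemma lft_real {I : ℍ} (hI : I * I = -1) (r : ℝ) : lft hI ((r:ℂ)) = (r : ℍ) := by
  rw [lft_apply]; simp

lemma coe_smul' (r : ℝ) (x : ℍ) : r • x = (r : ℍ) * x := by
  rw [Algebra.smul_def, Quaternion.algebraMap_def]

lemma starPow_rep {I J : ℍ} (hI : I * I = -1) (hJ : J * J = -1) (z w : ℂ) (n : ℕ) :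
    starPow (lft hJ w) n (lft hI z) =
      lft hI (((z - w)^n + (z - (starRingEnd ℂ) w)^n) / 2)
        + lft hI (((z - w)^n - (z - (starRingEnd ℂ) w)^n) / (2 * Complex.I)) * J := by
  rw [starPow_eq_sum, ← complexE z w n, ← complexF z w n, map_sum, map_sum, Finset.sum_mul,
    ← Finset.sum_add_distrib]
  refine Finset.sum_congr rfl fun k _ => ?_
  have hv : (-(lft hJ w))^(n-k) = ((((-w)^(n-k)).re : ℝ) : ℍ) + (((-w)^(n-k)).im) • J := by
    rw [← map_neg, ← map_pow, lft_apply]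
  rw [show (lft hI z)^k = lft hI (z^k) from (map_pow _ _ _).symm, hv, mul_add]
  set c := (n.choose k : ℝ) with hc
  set v := (-w)^(n-k) with hvv
  have e1 : lft hI (z^k) * ((v.re : ℝ) : ℍ) = lft hI (z^k * ((v.re:ℝ):ℂ)) := by
    rw [map_mul, lft_real]
  have e2 : lft hI (z^k) * (v.im • J) = lft hI (z^k * ((v.im:ℝ):ℂ)) * J := by
    rw [map_mul, lft_real, coe_smul' v.im J, ← mul_assoc]
  rw [e1, e2, smul_add, map_smul, map_smul, smul_mul_assoc]

lemma upper_norm {I J : ℍ} (hI : I * I = -1) (hJ : J * J = -1) (E F : ℂ) :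
    ‖lft hI E + lft hI F * J‖ ≤ ‖E‖ + ‖F‖ := by
  calc ‖lft hI E + lft hI F * J‖ ≤ ‖lft hI E‖ + ‖lft hI F * J‖ := norm_add_le _ _
  _ = ‖E‖ + ‖F‖ := by
      rw [norm_mul, unit_norm hJ, lft_norm, lft_norm, mul_one]

lemma lower_norm {I J : ℍ} (hI : I * I = -1) (E F : ℂ) :
    ‖J + I*J*I‖ * ‖F‖ ≤ 2 * ‖lft hI E + lft hI F * J‖ := by
  set X := lft hI E + lft hI F * J with hXdef
  have hX : lft hI F * (J + I*J*I) = X + I * X * I := by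
    have c1 : I * lft hI E * I = lft hI E * (I*I) := by rw [lft_comm, mul_assoc]
    have c2 : I * (lft hI F * J) * I = lft hI F * (I*J*I) := by
      rw [← mul_assoc, ← mul_assoc, lft_comm, mul_assoc, mul_assoc, mul_assoc, mul_assoc]
    rw [hXdef, mul_add (lft hI F), mul_add I, add_mul _ _ I, c1, c2, hI, mul_neg_one]
    abel
  have h2 : ‖X + I * X * I‖ ≤ 2 * ‖X‖ := by
    calc ‖X + I * X * I‖ ≤ ‖X‖ + ‖I * X * I‖ := norm_add_le _ _
    _ = ‖X‖ + ‖X‖ := by rw [norm_mul, norm_mul, unit_norm hI, one_mul, mul_one]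
    _ = 2 * ‖X‖ := by ring
  calc ‖J + I*J*I‖ * ‖F‖ = ‖lft hI F * (J + I*J*I)‖ := by
        rw [norm_mul, lft_norm, mul_comm]
  _ = ‖X + I * X * I‖ := by rw [hX]
  _ ≤ 2 * ‖X‖ := h2

lemma commuting_units {I J : ℍ} (hI : I * I = -1) (hJ : J * J = -1) (h : I * J = J * I) :
    J = I ∨ J = -I := by
  have hK : (I*J) * (I*J) = 1 := by
    calc (I*J) * (I*J) = I * ((J*I)*J) := by rw [mul_assoc, mul_assoc]
    _ = I * ((I*J)*J) := by rw [h]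
    _ = (I*I) * (J*J) := by rw [mul_assoc, ← mul_assoc]
    _ = 1 := by rw [hI, hJ]; norm_num
  have hfac : (I*J - 1) * (I*J + 1) = 0 := by
    rw [sub_mul, mul_add, mul_add, hK, one_mul, mul_one, one_mul]; abel
  rcases mul_eq_zero.mp hfac with h' | h'
  · -- I*J = 1 ⇒ J = -I
    right
    have h1 : I * J = 1 := by rwa [sub_eq_zero] at h'
    have : I * (I * J) = I := by rw [h1, mul_one]
    rw [← mul_assoc, hI] at this
    simpa [neg_eq_iff_eq_neg] using this
  · left
    have h1 : I * J = -1 := by rwa [add_eq_zero_iff_eq_neg] at h'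
    have : I * (I * J) = -I := by rw [h1]; simp
    rw [← mul_assoc, hI] at this
    simpa using this


lemma im_mul_self (u : ℍ) (h : u.re = 0) : u * u = -((‖u‖^2 : ℝ) : ℍ) := by
  have h1 : star u = -u := Quaternion.star_eq_neg.mpr h
  have h2 : u * star u = ((Quaternion.normSq u : ℝ) : ℍ) := Quaternion.self_mul_star u
  rw [h1, mul_neg] at h2
  have h3 : Quaternion.normSq u = ‖u‖^2 := by
    rw [Quaternion.normSq_eq_norm_mul_self, sq]
  rw [← h3]
  rw [← h2, neg_neg]

lemma exists_lift (q : ℍ) (h : q.im ≠ 0) :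
    ∃ I : ℍ, ∃ hI : I * I = -1, q = lft hI (⟨q.re, ‖q.im‖⟩ : ℂ) ∧ I = ‖q.im‖⁻¹ • q.im := by
  have hn : ‖q.im‖ ≠ 0 := norm_ne_zero_iff.mpr h
  have hI : (‖q.im‖⁻¹ • q.im) * (‖q.im‖⁻¹ • q.im) = -1 := by
    have hs : (‖q.im‖⁻¹ * ‖q.im‖⁻¹) * ‖q.im‖^2 = 1 := by
      rw [pow_two]; field_simp
    rw [smul_mul_smul_comm, im_mul_self q.im (Quaternion.re_im q), smul_neg,
      ← Quaternion.coe_smul, smul_eq_mul, hs, Quaternion.coe_one]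
  refine ⟨_, hI, ?_, rfl⟩
  rw [lft_apply]
  show q = (q.re : ℍ) + ‖q.im‖ • (‖q.im‖⁻¹ • q.im)
  rw [smul_smul, mul_inv_cancel₀ hn, one_smul, Quaternion.re_add_im]

lemma sameLine_of_im_zero_right (q p : ℍ) (h : p.im = 0) : SameLine q p := by
  have hp : p = (p.re : ℍ) := by
    conv_lhs => rw [← Quaternion.re_add_im p]
    rw [h, add_zero]
  rcases eq_or_ne q.im 0 with h' | h'
  · have hq : q = (q.re : ℍ) := by
      conv_lhs => rw [← Quaternion.re_add_im q]
      rw [h', add_zero]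
    refine ⟨(⟨0,1,0,0⟩ : ℍ), ?_, ⟨q.re, 0, by rw [hq]; simp; exact zero_smul ℝ _⟩,
      ⟨p.re, 0, by rw [hp]; simp; exact zero_smul ℝ _⟩⟩
    have key : (⟨0,1,0,0⟩ : ℍ) * (⟨0,1,0,0⟩ : ℍ) = -1 := by
      ext <;> simp [QuaternionAlgebra.re_mul, QuaternionAlgebra.imI_mul, QuaternionAlgebra.imJ_mul, QuaternionAlgebra.imK_mul]
    exact (pow_two _).trans key
  · obtain ⟨I, hI, hq, -⟩ := exists_lift q h'
    refine ⟨I, by rw [sq]; exact hI, ⟨q.re, ‖q.im‖, by nth_rewrite 1 [hq]; rw [lft_apply]⟩,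
      ⟨p.re, 0, by rw [hp]; simp⟩⟩

lemma sameLine_of_im_zero_left (q p : ℍ) (h : q.im = 0) : SameLine q p := by
  obtain ⟨I, hI, h1, h2⟩ := sameLine_of_im_zero_right p q h
  exact ⟨I, hI, h2, h1⟩



lemma sigmaDist_nonneg (q p : ℍ) : 0 ≤ sigmaDist q p := by
  rw [sigmaDist]; split
  · exact norm_nonneg _
  · exact Real.sqrt_nonneg _

lemma sameLine_commute {q p : ℍ} (h : SameLine q p) : Commute q p := by
  obtain ⟨I, hI2, ⟨a,b,hq⟩, ⟨c,d,hp⟩⟩ := h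
  have hI : I * I = -1 := by rw [← sq]; exact hI2
  have hq' : q = lft hI ⟨a,b⟩ := by rw [lft_apply]; exact hq
  have hp' : p = lft hI ⟨c,d⟩ := by rw [lft_apply]; exact hp
  rw [hq', hp']
  show lft hI ⟨a,b⟩ * lft hI ⟨c,d⟩ = lft hI ⟨c,d⟩ * lft hI ⟨a,b⟩
  rw [← map_mul, ← map_mul, mul_comm]

lemma starPow_commute (p q : ℍ) (h : Commute q p) (n : ℕ) : starPow p n q = (q - p)^n := by
  rw [starPow_eq_sum, sub_eq_add_neg, Commute.add_pow h.neg_right]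
  refine Finset.sum_congr rfl fun k _ => ?_
  rw [coe_smul']
  push_cast
  exact ((Nat.cast_commute (α := ℍ) (n.choose k) (q^k * (-p)^(n-k))).eq)

lemma sigma_bounds (p q : ℍ) :
    ∃ ρ c : ℝ, 0 ≤ ρ ∧ 0 < c ∧ (0 < sigmaDist q p → ρ < sigmaDist q p) ∧
      (∀ n, ‖starPow p n q‖ ≤ 2 * (sigmaDist q p)^n) ∧
      (∀ n, c * ((sigmaDist q p)^n - ρ^n) ≤ ‖starPow p n q‖) := by
  by_cases hSL : SameLine q p
  · have hσ : sigmaDist q p = ‖q - p‖ := by rw [sigmaDist, if_pos hSL]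
    have hsp : ∀ n, starPow p n q = (q - p)^n := starPow_commute p q (sameLine_commute hSL)
    refine ⟨0, 1, le_refl 0, one_pos, fun h => h, fun n => ?_, fun n => ?_⟩
    · rw [hsp, norm_pow, hσ]
      nlinarith [pow_nonneg (norm_nonneg (q-p)) n]
    · rw [hsp, norm_pow, hσ, one_mul]
      have : (0:ℝ) ≤ (0:ℝ)^n := pow_nonneg (le_refl 0) n
      linarith
  · -- not same line
    have hqim : q.im ≠ 0 := fun h => hSL (sameLine_of_im_zero_left q p h)
    have hpim : p.im ≠ 0 := fun h => hSL (sameLine_of_im_zero_right q p h)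
    have hy : (0:ℝ) < ‖q.im‖ := norm_pos_iff.mpr hqim
    have hv : (0:ℝ) < ‖p.im‖ := norm_pos_iff.mpr hpim
    obtain ⟨I, hI, hqI, hIdef⟩ := exists_lift q hqim
    obtain ⟨J, hJ, hpJ, hJdef⟩ := exists_lift p hpim
    set z : ℂ := ⟨q.re, ‖q.im‖⟩ with hz
    set w : ℂ := ⟨p.re, ‖p.im‖⟩ with hw
    have hσ : sigmaDist q p = ‖z - (starRingEnd ℂ) w‖ := by
      rw [sigmaDist, if_neg hSL, omegaDist, Complex.norm_def, Complex.normSq_apply]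
      congr 1
      simp only [hz, hw, Complex.sub_re, Complex.sub_im, Complex.conj_re, Complex.conj_im]
      ring
    have hρσ : ‖z - w‖ < sigmaDist q p := by
      rw [hσ, Complex.norm_def, Complex.norm_def]
      apply Real.sqrt_lt_sqrt (Complex.normSq_nonneg _)
      rw [Complex.normSq_apply, Complex.normSq_apply]
      simp only [hz, hw, Complex.sub_re, Complex.sub_im, Complex.conj_re, Complex.conj_im]
      nlinarith
    set σ := sigmaDist q p with hσdef
    set ρ := ‖z - w‖ with hρdef
    have hρ0 : 0 ≤ ρ := norm_nonneg _
    have hσ0 : 0 < σ := lt_of_le_of_lt hρ0 hρσ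
    set P : ℕ → ℂ := fun n => (z - w)^n with hP
    set Q : ℕ → ℂ := fun n => (z - (starRingEnd ℂ) w)^n with hQ
    have hrep : ∀ n, starPow p n q =
        lft hI ((P n + Q n) / 2) + lft hI ((P n - Q n) / (2 * Complex.I)) * J := by
      intro n
      rw [hqI, hpJ]
      exact starPow_rep hI hJ z w n
    have habsP : ∀ n, ‖P n‖ = ρ^n := fun n => by rw [hP, norm_pow]
    have habsQ : ∀ n, ‖Q n‖ = σ^n := fun n => by rw [hQ, norm_pow, ← hσ]
    have habs2 : ‖(2:ℂ)‖ = 2 := by norm_num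
    have habs2I : ‖2 * Complex.I‖ = 2 := by simp
    have hJI : ‖J + I*J*I‖ ≠ 0 := by
      intro h0
      apply hSL
      have h1 : J = -(I*J*I) := eq_neg_of_add_eq_zero_left (norm_eq_zero.mp h0)
      have h2 : I * J = J * I := by
        nth_rewrite 1 [h1]
        calc I * -(I*J*I) = -((I*I)*(J*I)) := by rw [mul_neg]; congr 1; noncomm_ring
        _ = J * I := by rw [hI]; simp
      rcases commuting_units hI hJ h2 with hJ' | hJ'
      · exact ⟨I, by rw [sq]; exact hI, ⟨q.re, ‖q.im‖, by nth_rewrite 1 [hqI]; rw [lft_apply]⟩,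
          ⟨p.re, ‖p.im‖, by nth_rewrite 1 [hpJ]; rw [lft_apply, hJ']⟩⟩
      · refine ⟨I, by rw [sq]; exact hI, ⟨q.re, ‖q.im‖, by nth_rewrite 1 [hqI]; rw [lft_apply]⟩,
          ⟨p.re, -‖p.im‖, ?_⟩⟩
        nth_rewrite 1 [hpJ]
        rw [lft_apply, hJ', smul_neg, ← neg_smul]
    have hJInn : (0:ℝ) ≤ ‖J + I*J*I‖ := norm_nonneg _
    have hc : 0 < ‖J + I*J*I‖ / 4 := by
      rcases lt_or_eq_of_le hJInn with h | h
      · linarith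
      · exact absurd h.symm hJI
    have hρσn : ∀ n, ρ^n ≤ σ^n := fun n => pow_le_pow_left₀ hρ0 (le_of_lt hρσ) n
    refine ⟨ρ, ‖J + I*J*I‖ / 4, hρ0, hc, fun _ => hρσ, fun n => ?_, fun n => ?_⟩
    · -- upper bound
      rw [hrep n]
      refine le_trans (upper_norm hI hJ _ _) ?_
      have hE : ‖(P n + Q n) / 2‖ ≤ (ρ^n + σ^n)/2 := by
        rw [norm_div, habs2]
        have := norm_add_le (P n) (Q n)
        rw [habsP, habsQ] at this
        linarith
      have hF : ‖(P n - Q n) / (2 * Complex.I)‖ ≤ (ρ^n + σ^n)/2 := by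
        rw [norm_div, habs2I]
        have h1 : ‖P n - Q n‖ ≤ ‖P n‖ + ‖Q n‖ := by
          exact norm_sub_le (P n) (Q n)
        rw [habsP, habsQ] at h1
        linarith
      have := hρσn n
      linarith
    · -- lower bound
      have hln := lower_norm hI ((P n + Q n) / 2) ((P n - Q n) / (2 * Complex.I)) (J := J)
      rw [← hrep n] at hln
      have hFlow : (σ^n - ρ^n)/2 ≤ ‖(P n - Q n) / (2 * Complex.I)‖ := by
        rw [norm_div, habs2I]
        have h1 : ‖Q n‖ - ‖P n‖ ≤ ‖P n - Q n‖ := by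
          have := norm_sub_norm_le (Q n) (P n)
          rw [norm_sub_rev] at this
          exact this
        rw [habsP, habsQ] at h1
        linarith
      nlinarith [mul_le_mul_of_nonneg_left hFlow hJInn, norm_nonneg (starPow p n q)]


open Filter in
set_option maxHeartbeats 1000000 in
theorem regular_series_convergence (a : ℕ → ℍ) (R : ENNReal)
    (hR : R⁻¹ = Filter.limsup (fun n : ℕ => ((‖a n‖₊ : ENNReal)) ^ (1/(n:ℝ))) Filter.atTop)
    (p : ℍ) :
    (∀ q : ℍ, ENNReal.ofReal (sigmaDist q p) < R →
      Summable (fun n : ℕ => ‖starPow p n q * a n‖)) ∧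
    (∀ q : ℍ, R < ENNReal.ofReal (sigmaDist q p) →
      ¬ ∃ l : ℍ, Filter.Tendsto (fun N : ℕ => ∑ n ∈ Finset.range N, starPow p n q * a n)
        Filter.atTop (nhds l)) := by
  constructor
  · -- convergence
    intro q hq
    obtain ⟨ρ, c, hρ0, hc0, hρσ, hub, hlb⟩ := sigma_bounds p q
    set σ := sigmaDist q p with hσdef
    have hσ0 : 0 ≤ σ := sigmaDist_nonneg q p
    obtain ⟨t, ht1, ht2⟩ := ENNReal.lt_iff_exists_nnreal_btwn.mp hq
    have htpos : 0 < (t:ℝ) := by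
      have h0 : (0:ENNReal) < (t:ENNReal) := lt_of_le_of_lt zero_le ht1
      exact_mod_cast h0
    have hσt : σ < (t:ℝ) := by
      rw [← ENNReal.ofReal_coe_nnreal] at ht1
      exact (ENNReal.ofReal_lt_ofReal_iff htpos).mp ht1
    have hev : ∀ᶠ n in atTop, (‖a n‖₊ : ENNReal) ^ (1/(n:ℝ)) < ((t:ENNReal))⁻¹ :=
      Filter.eventually_lt_of_limsup_lt (by rw [← hR]; exact ENNReal.inv_lt_inv.mpr ht2)
    have htne : (t : NNReal) ≠ 0 := by exact_mod_cast ne_of_gt htpos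
    have hev2 : ∀ᶠ n in atTop, ‖a n‖ ≤ ((t:ℝ)⁻¹)^n := by
      filter_upwards [hev, Filter.eventually_ge_atTop 1] with n h1 hn1
      have hne : (n:ℝ) ≠ 0 := Nat.cast_ne_zero.mpr (by omega)
      have h3 : (‖a n‖₊ : ENNReal) = ((‖a n‖₊ : ENNReal) ^ (1/(n:ℝ)))^(n:ℝ) := by
        rw [← ENNReal.rpow_mul, one_div, inv_mul_cancel₀ hne, ENNReal.rpow_one]
      have h4 : (‖a n‖₊ : ENNReal) ≤ (((t:ENNReal))⁻¹)^(n:ℝ) := by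
        rw [h3]; exact ENNReal.rpow_le_rpow (le_of_lt h1) (Nat.cast_nonneg n)
      rw [ENNReal.rpow_natCast, ← ENNReal.coe_inv htne, ← ENNReal.coe_pow,
        ENNReal.coe_le_coe] at h4
      have h5 : ‖a n‖ = ((‖a n‖₊ : NNReal) : ℝ) := (coe_nnnorm _).symm
      rw [h5]
      calc ((‖a n‖₊ : NNReal) : ℝ) ≤ (((t⁻¹ ^ n : NNReal)) : ℝ) := by exact_mod_cast h4
      _ = ((t:ℝ)⁻¹)^n := by push_cast; ring
    rw [Filter.eventually_atTop] at hev2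
    obtain ⟨N, hN⟩ := hev2
    rw [← summable_nat_add_iff N]
    have hr0 : 0 ≤ σ / (t:ℝ) := div_nonneg hσ0 (le_of_lt htpos)
    have hr1 : σ / (t:ℝ) < 1 := (div_lt_one htpos).mpr hσt
    refine Summable.of_nonneg_of_le (f := fun n => (2 * (σ/(t:ℝ))^N) * (σ/(t:ℝ))^n)
      (fun n => norm_nonneg _) ?_ ?_
    · intro n
      rw [norm_mul]
      have hb1 := hub (n + N)
      have hb2 := hN (n + N) (by omega)
      have hsp0 : (0:ℝ) ≤ ‖starPow p (n+N) q‖ := norm_nonneg _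
      have ha0 : (0:ℝ) ≤ ‖a (n+N)‖ := norm_nonneg _
      calc ‖starPow p (n+N) q‖ * ‖a (n+N)‖ ≤ (2 * σ^(n+N)) * (((t:ℝ))⁻¹)^(n+N) := by
            apply mul_le_mul hb1 hb2 ha0
            positivity
      _ = (2 * (σ/(t:ℝ))^N) * (σ/(t:ℝ))^n := by
            rw [div_eq_mul_inv, mul_pow, mul_pow, pow_add, pow_add]
            ring
    · exact (summable_geometric_of_lt_one hr0 hr1).mul_left _
  · -- divergence
    intro q hq hex
    obtain ⟨l, hl⟩ := hex
    have hσ0 : 0 < sigmaDist q p := by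
      by_contra h
      push_neg at h
      rw [ENNReal.ofReal_eq_zero.mpr h] at hq
      exact (not_lt.mpr (zero_le : (0:ENNReal) ≤ R)) hq
    obtain ⟨ρ, c, hρ0, hc0, hρσ', hub, hlb⟩ := sigma_bounds p q
    have hρσ := hρσ' hσ0
    set σ := sigmaDist q p with hσdef
    have hmax : max (ENNReal.ofReal ρ) R < ENNReal.ofReal σ :=
      max_lt ((ENNReal.ofReal_lt_ofReal_iff hσ0).mpr hρσ) hq
    obtain ⟨t, -, ht1, ht2⟩ := ENNReal.lt_iff_exists_real_btwn.mp hmax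
    have htpos : 0 < t := by
      have h0 : (0:ENNReal) < ENNReal.ofReal t := lt_of_le_of_lt zero_le ht1
      exact ENNReal.ofReal_pos.mp h0
    have hρt : ρ < t :=
      (ENNReal.ofReal_lt_ofReal_iff htpos).mp (lt_of_le_of_lt (le_max_left _ _) ht1)
    have hRt : R < ENNReal.ofReal t := lt_of_le_of_lt (le_max_right _ _) ht1
    have htσ : t < σ := (ENNReal.ofReal_lt_ofReal_iff hσ0).mp ht2
    -- terms tend to zero
    have hterm : Tendsto (fun n => starPow p n q * a n) atTop (nhds 0) := by
      have h1 := (hl.comp (tendsto_add_atTop_nat 1)).sub hl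
      rw [sub_self] at h1
      refine h1.congr (fun N => ?_)
      show (∑ n ∈ Finset.range (N+1), starPow p n q * a n)
          - ∑ n ∈ Finset.range N, starPow p n q * a n = starPow p N q * a N
      rw [Finset.sum_range_succ]
      abel
    have hev1 : ∀ᶠ n in atTop, ‖starPow p n q * a n‖ < 1 :=
      NormedAddCommGroup.tendsto_nhds_zero.mp hterm 1 one_pos
    have hlim : (ENNReal.ofReal t)⁻¹
        < Filter.limsup (fun n : ℕ => ((‖a n‖₊ : ENNReal)) ^ (1/(n:ℝ))) Filter.atTop := by
      rw [← hR]; exact ENNReal.inv_lt_inv.mpr hRt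
    have hfreq : ∃ᶠ n in atTop, (ENNReal.ofReal t)⁻¹ < (‖a n‖₊ : ENNReal) ^ (1/(n:ℝ)) :=
      Filter.frequently_lt_of_lt_limsup (by isBoundedDefault) hlim
    have hone : 1 < σ / t := (one_lt_div htpos).mpr htσ
    have hgrow : ∀ᶠ n in atTop, 1 + 1/c < (σ/t)^n :=
      (tendsto_pow_atTop_atTop_of_one_lt hone).eventually_gt_atTop (1 + 1/c)
    obtain ⟨n, hfa, h1, hgn, hn1⟩ :=
      (hfreq.and_eventually (hev1.and (hgrow.and (eventually_ge_atTop 1)))).exists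
    -- ‖a n‖ ≥ t⁻¹ ^ n
    have hne : (n:ℝ) ≠ 0 := Nat.cast_ne_zero.mpr (by omega)
    have h3 : (‖a n‖₊ : ENNReal) = ((‖a n‖₊ : ENNReal) ^ (1/(n:ℝ)))^(n:ℝ) := by
      rw [← ENNReal.rpow_mul, one_div, inv_mul_cancel₀ hne, ENNReal.rpow_one]
    have h4 : ((ENNReal.ofReal t)⁻¹)^(n:ℝ) ≤ (‖a n‖₊ : ENNReal) := by
      rw [h3]; exact ENNReal.rpow_le_rpow (le_of_lt hfa) (Nat.cast_nonneg n)
    rw [ENNReal.rpow_natCast] at h4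
    have h5 : (t⁻¹)^n ≤ ‖a n‖ := by
      have h6 := ENNReal.toReal_mono (by simp) h4
      rw [ENNReal.toReal_pow, ENNReal.toReal_inv, ENNReal.toReal_ofReal (le_of_lt htpos)] at h6
      simpa using h6
    -- contradiction
    have hlbn := hlb n
    have hσρn : ρ^n ≤ σ^n := pow_le_pow_left₀ hρ0 (le_of_lt (lt_trans hρt htσ)) n
    have hρtn : ρ^n * (t⁻¹)^n ≤ 1 := by
      have : (ρ/t)^n ≤ 1 := pow_le_one₀ (div_nonneg hρ0 (le_of_lt htpos)) (le_of_lt ((div_lt_one htpos).mpr hρt))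
      calc ρ^n * (t⁻¹)^n = (ρ/t)^n := by rw [div_eq_mul_inv, mul_pow]
      _ ≤ 1 := this
    have hdiv : (σ/t)^n = σ^n * (t⁻¹)^n := by rw [div_eq_mul_inv, mul_pow]
    rw [norm_mul] at h1
    have htn0 : (0:ℝ) < (t⁻¹)^n := by positivity
    have hstep : c * (σ^n - ρ^n) * ((t⁻¹)^n) ≤ ‖starPow p n q‖ * ‖a n‖ := by
      apply mul_le_mul hlbn h5 (le_of_lt htn0)
      exact norm_nonneg _
    rw [hdiv] at hgn
    have hexp : c*(σ^n - ρ^n)*t⁻¹^n = c*(σ^n*t⁻¹^n) - c*(ρ^n*t⁻¹^n) := by ring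
    have hA := mul_lt_mul_of_pos_left hgn hc0
    have hB := mul_le_mul_of_nonneg_left hρtn (le_of_lt hc0)
    have hc1 : c*(1+1/c) = c+1 := by field_simp
    linarith
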